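/- For every odd integer k ≥ 5, there exists a finite simple graph G with exactly 2^{k−1} − k vertices that admits a redundant identifying code of size k. -/

import Mathlib

open scoped symmDiff

variable {V : Type*}

/-- The closed neighborhood of a vertex. -/
def closedNbhd (G : SimpleGraph V) (v : V) : Set V := insert v (G.neighborSet v)

/-- A vertex `v` is at least `k`-dominated by `S`. -/
def kDominated (G : SimpleGraph V) (S : Set V) (k : ℕ) (v : V) : Prop :=
  k ≤ (closedNbhd G v ∩ S).ncard

/-- Two vertices `u` and `v` are `k`-distinguished by `S`. -/
def kDistinguished (G : SimpleGraph V) (S : Set V) (k : ℕ) (u v : V) : Prop :=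
  k ≤ ((closedNbhd G u ∩ S) ∆ (closedNbhd G v ∩ S)).ncard

/-- `S` is an identifying code of `G`. -/
def IsIC (G : SimpleGraph V) (S : Set V) : Prop :=
  (∀ v, kDominated G S 1 v) ∧ ∀ u v, u ≠ v → kDistinguished G S 1 u v

/-- `S` is a redundant identifying code of `G`. -/
def IsRedIC (G : SimpleGraph V) (S : Set V) : Prop :=
  (∀ v, kDominated G S 2 v) ∧ ∀ u v, u ≠ v → kDistinguished G S 2 u v

/-- The minimum cardinality of a redundant identifying code of `G`. -/
noncomputable def redIC (G : SimpleGraph V) : ℕ :=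
  sInf {n | ∃ S : Set V, IsRedIC G S ∧ S.ncard = n}

/-- The degree of a vertex, as the cardinality of its open neighborhood. -/
noncomputable def deg (G : SimpleGraph V) (v : V) : ℕ := (G.neighborSet v).ncard

/-- A leaf is a vertex of degree 1. -/
def IsLeaf (G : SimpleGraph V) (v : V) : Prop := deg G v = 1

/-- A support vertex is a vertex adjacent to a leaf. -/
def IsSupport (G : SimpleGraph V) (v : V) : Prop := ∃ u, G.Adj v u ∧ IsLeaf G u

/-- Two distinct vertices are closed twins if they have the same closed neighborhood. -/
def ClosedTwins (G : SimpleGraph V) (u v : V) : Prop :=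
  u ≠ v ∧ closedNbhd G u = closedNbhd G v

/-! ### Auxiliary material for statement 9 -/

namespace Stmt9Aux

open Fin.CommRing

section FinArith

variable {k : ℕ} [NeZero k]

lemma natc_ne (m : ℕ) (h1 : 0 < m) (h2 : m < k) : ((m : ℕ) : Fin k) ≠ 0 := by
  intro h
  have := congrArg Fin.val h
  rw [Fin.val_natCast] at this
  simp [Nat.mod_eq_of_lt h2] at this
  omega

lemma shift_ne (i : Fin k) (m : ℕ) (h1 : 0 < m) (h2 : m < k) : i + (m : Fin k) ≠ i := by
  intro h
  exact natc_ne m h1 h2 (add_eq_left.mp h)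

end FinArith

/-- The cyclic triple `{i-1, i, i+1}` in `Fin k`. -/
def B {k : ℕ} [NeZero k] (i : Fin k) : Finset (Fin k) := {i - 1, i, i + 1}

section Bfacts

variable {k : ℕ} [NeZero k]

lemma mem_B_iff (i j : Fin k) : j ∈ B i ↔ j = i - 1 ∨ j = i ∨ j = i + 1 := by
  simp [B]

lemma B_self (i : Fin k) : i ∈ B i := by simp [B]

lemma B_symm (i j : Fin k) : j ∈ B i ↔ i ∈ B j := by
  rw [mem_B_iff, mem_B_iff]
  constructor
  · rintro (h | h | h)
    · right; right; rw [h, sub_add_cancel]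
    · right; left; rw [h]
    · left; rw [h, add_sub_cancel_right]
  · rintro (h | h | h)
    · right; right; rw [h, sub_add_cancel]
    · right; left; rw [h]
    · left; rw [h, add_sub_cancel_right]

variable (h5 : 5 ≤ k)
include h5

lemma B_card (i : Fin k) : (B i).card = 3 := by
  have h1 : i - 1 ≠ i := fun h =>
    shift_ne i 1 (by omega) (by omega) (by push_cast; linear_combination -h)
  have h2 : i - 1 ≠ i + 1 := fun h =>
    shift_ne i 2 (by omega) (by omega) (by push_cast; linear_combination -h)
  have h3 : i ≠ i + 1 := fun h =>
    shift_ne i 1 (by omega) (by omega) (by push_cast; linear_combination -h)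
  rw [B, Finset.card_insert_of_notMem (by simp [h1, h2]),
    Finset.card_insert_of_notMem (by simp [h3]), Finset.card_singleton]

lemma B_inj : Function.Injective (B (k := k)) := by
  intro i j h
  have hmem : i ∈ B j := by rw [← h]; exact B_self i
  rw [mem_B_iff] at hmem
  rcases hmem with hij | hij | hij
  · -- i = j - 1
    have hm : i - 1 ∈ B j := by rw [← h]; exact (mem_B_iff i (i - 1)).mpr (Or.inl rfl)
    rw [mem_B_iff, hij] at hm
    rcases hm with hc | hc | hc
    · exact absurd (by push_cast; linear_combination -hc) (shift_ne j 1 (by omega) (by omega))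
    · exact absurd (by push_cast; linear_combination -hc) (shift_ne j 2 (by omega) (by omega))
    · exact absurd (by push_cast; linear_combination -hc) (shift_ne j 3 (by omega) (by omega))
  · exact hij
  · -- i = j + 1
    have hm : i + 1 ∈ B j := by rw [← h]; exact (mem_B_iff i (i + 1)).mpr (Or.inr (Or.inr rfl))
    rw [mem_B_iff, hij] at hm
    rcases hm with hc | hc | hc
    · exact absurd (by push_cast; linear_combination hc) (shift_ne j 3 (by omega) (by omega))
    · exact absurd (by push_cast; linear_combination hc) (shift_ne j 2 (by omega) (by omega))
    · exact absurd (by push_cast; linear_combination hc) (shift_ne j 1 (by omega) (by omega))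

end Bfacts

lemma card_symmDiff_zero (k : ℕ) [NeZero k] (A : Finset (Fin k)) :
    Odd (A ∆ {0}).card ↔ ¬ Odd A.card := by
  classical
  by_cases h0 : (0 : Fin k) ∈ A
  · have h1 : A ∆ {0} = A.erase 0 := by
      rw [symmDiff_def]
      simp [Finset.sdiff_singleton_eq_erase, Finset.sdiff_eq_empty_iff_subset.mpr
        (Finset.singleton_subset_iff.mpr h0)]
    rw [h1, Finset.card_erase_of_mem h0]
    have hA : 1 ≤ A.card := Finset.card_pos.mpr ⟨0, h0⟩
    rw [Nat.odd_iff, Nat.odd_iff]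
    omega
  · have h1 : A ∆ {0} = insert (0 : Fin k) A := by
      rw [symmDiff_def]
      have : ({0} : Finset (Fin k)) \ A = {0} := by
        rw [Finset.sdiff_eq_self_iff_disjoint]
        simpa using h0
      rw [this, Finset.sdiff_singleton_eq_erase, Finset.erase_eq_of_notMem h0]
      rw [Finset.sup_eq_union, Finset.union_comm, Finset.insert_eq]
    rw [h1, Finset.card_insert_of_notMem h0, Nat.odd_iff, Nat.odd_iff]
    omega

lemma card_odd_subtype (k : ℕ) (hk : 0 < k) :
    Fintype.card {A : Finset (Fin k) // Odd A.card} = 2 ^ (k - 1) := by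
  haveI : NeZero k := ⟨by omega⟩
  have key : ∀ A : Finset (Fin k), Odd (A ∆ {0}).card ↔ ¬ Odd A.card :=
    card_symmDiff_zero k
  let e : {A : Finset (Fin k) // Odd A.card} ≃ {A : Finset (Fin k) // ¬ Odd A.card} :=
    { toFun := fun A => ⟨A.1 ∆ {0}, fun h => ((key A.1).mp h) A.2⟩
      invFun := fun B => ⟨B.1 ∆ {0}, (key B.1).mpr B.2⟩
      left_inv := fun A => Subtype.ext (symmDiff_symmDiff_cancel_right {0} A.1)
      right_inv := fun B => Subtype.ext (symmDiff_symmDiff_cancel_right {0} B.1) }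
  have h1 := Fintype.card_congr e
  have h2 : Fintype.card {A : Finset (Fin k) // ¬ Odd A.card}
      = Fintype.card (Finset (Fin k)) - Fintype.card {A : Finset (Fin k) // Odd A.card} :=
    Fintype.card_subtype_compl _
  have h3 : Fintype.card {A : Finset (Fin k) // Odd A.card} ≤ Fintype.card (Finset (Fin k)) :=
    Fintype.card_subtype_le _
  have h4 : Fintype.card (Finset (Fin k)) = 2 ^ k := by simp [Fintype.card_finset]
  have h5 : 2 ^ k = 2 * 2 ^ (k - 1) := by
    rw [← pow_succ']
    congr 1
    omega
  omega

lemma card_good_subtype (k : ℕ) (hk : 0 < k) :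
    Fintype.card {A : Finset (Fin k) // Odd A.card ∧ A.card ≠ 1} = 2 ^ (k - 1) - k := by
  classical
  rw [Fintype.card_subtype]
  have hodd : (Finset.univ.filter (fun A : Finset (Fin k) => Odd A.card)).card = 2 ^ (k - 1) := by
    rw [← Fintype.card_subtype]
    exact card_odd_subtype k hk
  have hsing : (Finset.univ.filter (fun A : Finset (Fin k) => A.card = 1)).card = k := by
    rw [← Finset.powerset_univ, ← Finset.powersetCard_eq_filter, Finset.card_powersetCard]
    simp
  have hsub : (Finset.univ.filter (fun A : Finset (Fin k) => A.card = 1))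
      ⊆ (Finset.univ.filter (fun A : Finset (Fin k) => Odd A.card)) := by
    intro A hA
    simp only [Finset.mem_filter, Finset.mem_univ, true_and] at *
    rw [hA]; exact odd_one
  have heq : Finset.univ.filter (fun A : Finset (Fin k) => Odd A.card ∧ A.card ≠ 1)
      = (Finset.univ.filter (fun A : Finset (Fin k) => Odd A.card))
        \ (Finset.univ.filter (fun A : Finset (Fin k) => A.card = 1)) := by
    ext A
    simp only [Finset.mem_filter, Finset.mem_sdiff, Finset.mem_univ, true_and]
    try tauto
  rw [heq, Finset.card_sdiff_of_subset hsub, hodd, hsing]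

end Stmt9Aux

theorem stmt_9 (k : ℕ) (hk : Odd k) (h5 : 5 ≤ k) :
    ∃ (G : SimpleGraph (Fin (2 ^ (k - 1) - k))) (S : Set (Fin (2 ^ (k - 1) - k))),
      IsRedIC G S ∧ S.ncard = k := by
  classical
  haveI : NeZero k := ⟨by omega⟩
  open Stmt9Aux in
  set n := 2 ^ (k - 1) - k with hn
  -- the equivalence between vertices and "good" subsets of `Fin k`
  have hcard : Fintype.card {A : Finset (Fin k) // Odd A.card ∧ A.card ≠ 1} = n :=
    Stmt9Aux.card_good_subtype k (by omega)
  let e : Fin n ≃ {A : Finset (Fin k) // Odd A.card ∧ A.card ≠ 1} :=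
    (Fintype.equivFinOfCardEq hcard).symm
  let f : Fin n → Finset (Fin k) := fun x => (e x).1
  have f_inj : Function.Injective f := fun x y h =>
    e.injective (Subtype.ext h)
  have f_good : ∀ x, Odd (f x).card ∧ (f x).card ≠ 1 := fun x => (e x).2
  have hBgood : ∀ i : Fin k, Odd (Stmt9Aux.B i).card ∧ (Stmt9Aux.B i).card ≠ 1 := by
    intro i
    rw [Stmt9Aux.B_card h5 i]
    exact ⟨by decide, by decide⟩
  let s : Fin k → Fin n := fun i => e.symm ⟨Stmt9Aux.B i, hBgood i⟩
  have hfs : ∀ i, f (s i) = Stmt9Aux.B i := by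
    intro i
    simp only [f, s, Equiv.apply_symm_apply]
  have s_inj : Function.Injective s := by
    intro i j h
    apply Stmt9Aux.B_inj h5
    rw [← hfs i, ← hfs j, h]
  -- the graph
  let G : SimpleGraph (Fin n) :=
    { Adj := fun x y => x ≠ y ∧
        ((∃ j, f y = Stmt9Aux.B j ∧ j ∈ f x) ∨ (∃ j, f x = Stmt9Aux.B j ∧ j ∈ f y))
      symm := by
        constructor
        rintro x y ⟨h1, h2⟩
        exact ⟨h1.symm, h2.symm⟩
      loopless := ⟨fun x h => h.1 rfl⟩ }
  let S : Set (Fin n) := Set.range s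
  -- the key identity for identifiers
  have key : ∀ x, closedNbhd G x ∩ S = s '' (↑(f x) : Set (Fin k)) := by
    intro x
    ext y
    simp only [closedNbhd, Set.mem_inter_iff, Set.mem_insert_iff,
      SimpleGraph.mem_neighborSet, Set.mem_image, Finset.mem_coe, S, Set.mem_range]
    constructor
    · rintro ⟨hxy, i, hsi⟩
      have hfy : f y = Stmt9Aux.B i := by rw [← hsi, hfs]
      refine ⟨i, ?_, hsi⟩
      rcases hxy with rfl | hadj
      · rw [hfy]; exact Stmt9Aux.B_self i
      · obtain ⟨hne, hor | hor⟩ := hadj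
        · obtain ⟨j, hj1, hj2⟩ := hor
          have : i = j := Stmt9Aux.B_inj h5 (by rw [← hfy, hj1])
          rwa [this]
        · obtain ⟨j, hj1, hj2⟩ := hor
          rw [hfy] at hj2
          rw [hj1, ← Stmt9Aux.B_symm]
          exact hj2
    · rintro ⟨i, hi, rfl⟩
      refine ⟨?_, i, rfl⟩
      by_cases hfx : f x = Stmt9Aux.B i
      · left
        apply f_inj
        rw [hfs, hfx]
      · right
        refine ⟨?_, Or.inl ⟨i, hfs i, hi⟩⟩
        intro hxy
        exact hfx (by rw [hxy, hfs])
    -- symmetry of Adj is used above implicitly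
  have hncard : ∀ x, (closedNbhd G x ∩ S).ncard = (f x).card := by
    intro x
    rw [key x, Set.ncard_image_of_injective _ s_inj, Set.ncard_coe_finset]
  refine ⟨G, S, ⟨?_, ?_⟩, ?_⟩
  · -- 2-domination
    intro v
    unfold kDominated
    rw [hncard v]
    obtain ⟨⟨m, hm⟩, hne⟩ := f_good v
    omega
  · -- 2-distinguishing
    intro u v huv
    unfold kDistinguished
    have hsym : (closedNbhd G u ∩ S) ∆ (closedNbhd G v ∩ S)
        = s '' (↑(f u ∆ f v) : Set (Fin k)) := by
      rw [key u, key v, ← Set.image_symmDiff s_inj, Finset.coe_symmDiff]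
    rw [hsym, Set.ncard_image_of_injective _ s_inj, Set.ncard_coe_finset]
    have hfne : f u ≠ f v := fun h => huv (f_inj h)
    have hne : f u ∆ f v ≠ ∅ := by
      intro h
      exact hfne (symmDiff_eq_bot.mp h)
    have hpos : 0 < (f u ∆ f v).card := Finset.card_pos.mpr (Finset.nonempty_of_ne_empty hne)
    have hcardsd : (f u ∆ f v).card = (f u \ f v).card + (f v \ f u).card := by
      rw [symmDiff_def, Finset.sup_eq_union]
      exact Finset.card_union_of_disjoint (disjoint_sdiff_sdiff)
    have h1 : (f u \ f v).card + (f u ∩ f v).card = (f u).card :=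
      Finset.card_sdiff_add_card_inter _ _
    have h2 : (f v \ f u).card + (f v ∩ f u).card = (f v).card :=
      Finset.card_sdiff_add_card_inter _ _
    have h3 : (f u ∩ f v).card = (f v ∩ f u).card := by rw [Finset.inter_comm]
    obtain ⟨⟨m1, hm1⟩, -⟩ := f_good u
    obtain ⟨⟨m2, hm2⟩, -⟩ := f_good v
    omega
  · -- cardinality of the code
    have : S = ↑(Finset.image s Finset.univ) := by
      rw [Finset.coe_image, Finset.coe_univ, Set.image_univ]
    rw [this, Set.ncard_coe_finset, Finset.card_image_of_injective _ s_inj, Finset.card_univ,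
      Fintype.card_fin]
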